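/- For every bipartite graph G without isolated vertices there exists a bipartite graph G' without isolated vertices with ν(G') = ν(G) + 4 vertices and ι_m(G') = ι_m(G) + 2 maximal independent sets. -/

import Mathlib

/-- `s` is an independent set of vertices in `G`. -/
def IsIndep {V : Type*} (G : SimpleGraph V) (s : Finset V) : Prop :=
  ∀ u ∈ s, ∀ v ∈ s, ¬ G.Adj u v

/-- `s` is a maximal independent set in `G`. -/
def IsMaxIndep {V : Type*} (G : SimpleGraph V) (s : Finset V) : Prop :=
  IsIndep G s ∧ ∀ t : Finset V, IsIndep G t → s ⊆ t → s = t

/-- `ι G`: the number of independent sets of `G` (including `∅`). -/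
noncomputable def iota {V : Type*} [Fintype V] (G : SimpleGraph V) : ℕ :=
  Nat.card {s : Finset V // IsIndep G s}

/-- `ι_m G`: the number of maximal independent sets of `G`. -/
noncomputable def iotaM {V : Type*} [Fintype V] (G : SimpleGraph V) : ℕ :=
  Nat.card {s : Finset V // IsMaxIndep G s}

/-- `(L, R)` is a bipartition of `G`. -/
def IsBipartition {V : Type*} (G : SimpleGraph V) (L R : Finset V) : Prop :=
  Disjoint L R ∧ (∀ v : V, v ∈ L ∨ v ∈ R) ∧
    ∀ u v : V, G.Adj u v → (u ∈ L ∧ v ∈ R) ∨ (u ∈ R ∧ v ∈ L)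

/-- `G` is bipartite. -/
def IsBipartite {V : Type*} (G : SimpleGraph V) : Prop :=
  ∃ L R : Finset V, IsBipartition G L R

/-- `G` has no isolated vertices. -/
def NoIsolated {V : Type*} (G : SimpleGraph V) : Prop :=
  ∀ v : V, ∃ u : V, G.Adj v u

/-- For every bipartite graph `G` without isolated vertices there is a bipartite
graph `G'` without isolated vertices with `ν(G) + 4` vertices and `ι_m(G) + 2`
maximal independent sets. -/
lemma isMaxIndep_iff {V : Type*} (G : SimpleGraph V) (s : Finset V) :
    IsMaxIndep G s ↔ IsIndep G s ∧ ∀ v ∉ s, ∃ u ∈ s, G.Adj v u := by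
  classical
  constructor
  · rintro ⟨hind, hmax⟩
    refine ⟨hind, fun v hv => ?_⟩
    by_contra h
    push_neg at h
    have hins : IsIndep G (insert v s) := by
      intro x hx' y hy' hadj
      rcases Finset.mem_insert.1 hx' with hx | hx <;>
        rcases Finset.mem_insert.1 hy' with hy | hy
      · rw [hx, hy] at hadj; exact G.irrefl hadj
      · rw [hx] at hadj; exact h y hy hadj
      · rw [hy] at hadj; exact h x hx hadj.symm
      · exact hind x hx y hy hadj
    have := hmax _ hins (Finset.subset_insert _ _)
    exact hv (this ▸ Finset.mem_insert_self v s)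
  · rintro ⟨hind, hmax⟩
    refine ⟨hind, fun t ht hst => ?_⟩
    refine Finset.Subset.antisymm hst fun x hx => ?_
    by_contra hxs
    obtain ⟨u, hu, hadj⟩ := hmax x hxs
    exact ht x hx u (hst hu) hadj

def ext4 {V : Type*} (G : SimpleGraph V) (L : Finset V) : SimpleGraph (V ⊕ Fin 4) where
  Adj x y :=
    match x, y with
    | Sum.inl u, Sum.inl v => G.Adj u v
    | Sum.inl u, Sum.inr i => u ∈ L ∧ (i = 0 ∨ i = 2)
    | Sum.inr i, Sum.inl u => u ∈ L ∧ (i = 0 ∨ i = 2)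
    | Sum.inr i, Sum.inr j =>
        (i = 0 ∧ j = 1) ∨ (i = 1 ∧ j = 0) ∨ (i = 1 ∧ j = 2) ∨
        (i = 2 ∧ j = 1) ∨ (i = 2 ∧ j = 3) ∨ (i = 3 ∧ j = 2)
  symm := by
    constructor
    rintro (u|i) (v|j) h
    · exact G.adj_symm h
    · exact h
    · exact h
    · tauto
  loopless := by
    constructor
    rintro (u|i) h
    · exact G.irrefl h
    · rcases h with ⟨rfl,h⟩|⟨rfl,h⟩|⟨rfl,h⟩|⟨rfl,h⟩|⟨rfl,h⟩|⟨rfl,h⟩ <;> exact absurd h (by decide)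

@[simp] lemma ext4_adj_ll {V : Type*} {G : SimpleGraph V} {L : Finset V} {u v : V} :
    (ext4 G L).Adj (Sum.inl u) (Sum.inl v) ↔ G.Adj u v := Iff.rfl
@[simp] lemma ext4_adj_lr {V : Type*} {G : SimpleGraph V} {L : Finset V} {u : V} {i : Fin 4} :
    (ext4 G L).Adj (Sum.inl u) (Sum.inr i) ↔ u ∈ L ∧ (i = 0 ∨ i = 2) := Iff.rfl
@[simp] lemma ext4_adj_rl {V : Type*} {G : SimpleGraph V} {L : Finset V} {u : V} {i : Fin 4} :
    (ext4 G L).Adj (Sum.inr i) (Sum.inl u) ↔ u ∈ L ∧ (i = 0 ∨ i = 2) := Iff.rfl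
@[simp] lemma ext4_adj_rr {V : Type*} {G : SimpleGraph V} {L : Finset V} {i j : Fin 4} :
    (ext4 G L).Adj (Sum.inr i) (Sum.inr j) ↔
      (i = 0 ∧ j = 1) ∨ (i = 1 ∧ j = 0) ∨ (i = 1 ∧ j = 2) ∨
      (i = 2 ∧ j = 1) ∨ (i = 2 ∧ j = 3) ∨ (i = 3 ∧ j = 2) := Iff.rfl

def inlE (V : Type*) : V ↪ V ⊕ Fin 4 := ⟨Sum.inl, Sum.inl_injective⟩

lemma noIsolated_ext4 {V : Type*} {G : SimpleGraph V} {L : Finset V}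
    (hiso : NoIsolated G) : NoIsolated (ext4 G L) := by
  rintro (v | i)
  · obtain ⟨u, hu⟩ := hiso v
    exact ⟨Sum.inl u, hu⟩
  · fin_cases i
    · exact ⟨Sum.inr 1, by simp⟩
    · exact ⟨Sum.inr 0, by simp⟩
    · exact ⟨Sum.inr 1, by simp⟩
    · exact ⟨Sum.inr 2, by simp⟩

lemma isBipartition_ext4 {V : Type*} [DecidableEq V] {G : SimpleGraph V} {L R : Finset V}
    (hLR : IsBipartition G L R) :
    IsBipartition (ext4 G L)
      (L.map (inlE V) ∪ {Sum.inr 1, Sum.inr 3})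
      (R.map (inlE V) ∪ {Sum.inr 0, Sum.inr 2}) := by
  obtain ⟨hdis, hcov, hedge⟩ := hLR
  refine ⟨?_, ?_, ?_⟩
  · rw [Finset.disjoint_left]
    rintro x hx hy
    simp only [Finset.mem_union, Finset.mem_map, Finset.mem_insert, Finset.mem_singleton,
      inlE, Function.Embedding.coeFn_mk] at hx hy
    rcases hx with ⟨u, hu, rfl⟩ | hx <;> rcases hy with ⟨w, hw, h⟩ | hy
    · exact Finset.disjoint_left.1 hdis hu (Sum.inl_injective h ▸ hw)
    · rcases hy with h | h <;> simp at h
    · rcases hx with h | h <;> simp [h] at *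
    · rcases hx with rfl | rfl <;> rcases hy with h | h <;> simp at h
  · rintro (v | i)
    · rcases hcov v with h | h
      · exact Or.inl (by simp [inlE, h])
      · exact Or.inr (by simp [inlE, h])
    · fin_cases i
      · exact Or.inr (by simp)
      · exact Or.inl (by simp)
      · exact Or.inr (by simp)
      · exact Or.inl (by simp)
  · rintro (u | i) (v | j) hadj
    · rcases hedge u v hadj with ⟨h1, h2⟩ | ⟨h1, h2⟩
      · exact Or.inl ⟨by simp [inlE, h1], by simp [inlE, h2]⟩
      · exact Or.inr ⟨by simp [inlE, h1], by simp [inlE, h2]⟩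
    · obtain ⟨hu, hj⟩ := hadj
      rcases hj with rfl | rfl
      · exact Or.inl ⟨by simp [inlE, hu], by simp⟩
      · exact Or.inl ⟨by simp [inlE, hu], by simp⟩
    · obtain ⟨hv, hi⟩ := hadj
      rcases hi with rfl | rfl
      · exact Or.inr ⟨by simp, by simp [inlE, hv]⟩
      · exact Or.inr ⟨by simp, by simp [inlE, hv]⟩
    · rcases hadj with ⟨rfl, rfl⟩ | ⟨rfl, rfl⟩ | ⟨rfl, rfl⟩ | ⟨rfl, rfl⟩ | ⟨rfl, rfl⟩ | ⟨rfl, rfl⟩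
      · exact Or.inr ⟨by simp, by simp⟩
      · exact Or.inl ⟨by simp, by simp⟩
      · exact Or.inl ⟨by simp, by simp⟩
      · exact Or.inr ⟨by simp, by simp⟩
      · exact Or.inr ⟨by simp, by simp⟩
      · exact Or.inl ⟨by simp, by simp⟩

lemma char_ext4 {V : Type*} [DecidableEq V] {G : SimpleGraph V} {L R : Finset V}
    (hLR : IsBipartition G L R) (S : Finset (V ⊕ Fin 4)) :
    IsMaxIndep (ext4 G L) S ↔
      S = R.map (inlE V) ∪ {Sum.inr 0, Sum.inr 2} ∨
      S = R.map (inlE V) ∪ {Sum.inr 0, Sum.inr 3} ∨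
      ∃ T : Finset V, IsMaxIndep G T ∧ S = T.map (inlE V) ∪ {Sum.inr 1, Sum.inr 3} := by
  obtain ⟨hdis, hcov, hedge⟩ := hLR
  have hLRn : ∀ u : V, u ∈ L → u ∈ R → False := fun u h1 h2 =>
    Finset.disjoint_left.1 hdis h1 h2
  rw [isMaxIndep_iff]
  constructor
  · rintro ⟨hind, hmax⟩
    by_cases hA : (Sum.inr 0 : V ⊕ Fin 4) ∈ S
    · -- a ∈ S: then no L-vertex, all of R, b ∉ S
      have hnL : ∀ u ∈ L, Sum.inl u ∉ S := fun u hu hS =>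
        hind _ hS _ hA (by simp [hu])
      have hR : ∀ r ∈ R, Sum.inl r ∈ S := by
        intro r hr
        by_contra hrS
        obtain ⟨u, huS, hadj⟩ := hmax _ hrS
        rcases u with w | i
        · rcases hedge r w hadj with ⟨h1, _⟩ | ⟨_, h2⟩
          · exact hLRn r h1 hr
          · exact hnL w h2 huS
        · exact hLRn r hadj.1 hr
      have hB : (Sum.inr 1 : V ⊕ Fin 4) ∉ S := fun hB =>
        hind _ hA _ hB (by simp)
      have hinl : ∀ v : V, Sum.inl v ∈ S ↔ v ∈ R := by
        intro v
        constructor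
        · intro hv
          rcases hcov v with h | h
          · exact absurd hv (hnL v h)
          · exact h
        · exact hR v
      by_cases hC : (Sum.inr 2 : V ⊕ Fin 4) ∈ S
      · left
        have hD : (Sum.inr 3 : V ⊕ Fin 4) ∉ S := fun hD =>
          hind _ hC _ hD (by simp)
        ext x
        rcases x with v | i
        · simp [inlE, hinl v]
        · fin_cases i <;>
            simp [inlE, hA, hB, hC, hD]
      · right; left
        have hD : (Sum.inr 3 : V ⊕ Fin 4) ∈ S := by
          by_contra hD
          obtain ⟨u, huS, hadj⟩ := hmax _ hD
          rcases u with w | j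
          · rcases hadj.2 with h | h <;> simp at h
          · rcases hadj with ⟨h, _⟩ | ⟨h, _⟩ | ⟨h, _⟩ | ⟨h, _⟩ | ⟨h, _⟩ | ⟨_, rfl⟩
            · simp at h
            · simp at h
            · simp at h
            · simp at h
            · simp at h
            · exact hC huS
        ext x
        rcases x with v | i
        · simp [inlE, hinl v]
        · fin_cases i <;>
            simp [inlE, hA, hB, hC, hD]
    · -- a ∉ S
      have hC : (Sum.inr 2 : V ⊕ Fin 4) ∉ S := by
        intro hC
        obtain ⟨u, huS, hadj⟩ := hmax _ hA
        rcases u with w | j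
        · -- w ∈ L, but then w adjacent to inr 2 ∈ S
          exact hind _ huS _ hC (by simp [hadj.1])
        · rcases hadj with ⟨_, rfl⟩ | ⟨h, _⟩ | ⟨h, _⟩ | ⟨h, _⟩ | ⟨h, _⟩ | ⟨h, _⟩
          · exact hind _ huS _ hC (by simp)
          all_goals simp at h
      have hD : (Sum.inr 3 : V ⊕ Fin 4) ∈ S := by
        by_contra hD
        obtain ⟨u, huS, hadj⟩ := hmax _ hD
        rcases u with w | j
        · rcases hadj.2 with h | h <;> simp at h
        · rcases hadj with ⟨h, _⟩ | ⟨h, _⟩ | ⟨h, _⟩ | ⟨h, _⟩ | ⟨h, _⟩ | ⟨_, rfl⟩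
          · simp at h
          · simp at h
          · simp at h
          · simp at h
          · simp at h
          · exact hC huS
      have hB : (Sum.inr 1 : V ⊕ Fin 4) ∈ S := by
        by_contra hB
        obtain ⟨u, huS, hadj⟩ := hmax _ hB
        rcases u with w | j
        · rcases hadj.2 with h | h <;> simp at h
        · rcases hadj with ⟨h, _⟩ | ⟨_, rfl⟩ | ⟨_, rfl⟩ | ⟨h, _⟩ | ⟨h, _⟩ | ⟨h, _⟩
          · simp at h
          · exact hA huS
          · exact hC huS
          all_goals simp at h
      right; right
      refine ⟨S.preimage Sum.inl Sum.inl_injective.injOn, ?_, ?_⟩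
      · rw [isMaxIndep_iff]
        constructor
        · intro u hu v hv hadj
          exact hind _ (Finset.mem_preimage.1 hu) _ (Finset.mem_preimage.1 hv) hadj
        · intro v hv
          have hvS : Sum.inl v ∉ S := fun h => hv (Finset.mem_preimage.2 h)
          obtain ⟨u, huS, hadj⟩ := hmax _ hvS
          rcases u with w | i
          · exact ⟨w, Finset.mem_preimage.2 huS, hadj⟩
          · rcases hadj.2 with rfl | rfl
            · exact absurd huS hA
            · exact absurd huS hC
      · ext x
        rcases x with v | i
        · simp [inlE, Finset.mem_preimage]
        · fin_cases i <;> simp [inlE, hA, hB, hC, hD, Finset.mem_preimage]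
  · rintro (rfl | rfl | ⟨T, hT, rfl⟩)
    · constructor
      · intro x hx y hy hadj
        simp only [Finset.mem_union, Finset.mem_map, Finset.mem_insert, Finset.mem_singleton,
          inlE, Function.Embedding.coeFn_mk] at hx hy
        rcases hx with ⟨u, hu, rfl⟩ | (rfl | rfl) <;>
          rcases hy with ⟨w, hw, rfl⟩ | (rfl | rfl)
        · rcases hedge u w hadj with ⟨h1, _⟩ | ⟨_, h2⟩
          · exact hLRn u h1 hu
          · exact hLRn w h2 hw
        · exact hLRn u hadj.1 hu
        · exact hLRn u hadj.1 hu
        · exact hLRn w hadj.1 hw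
        · exact absurd hadj (by simp only [ext4_adj_rr]; decide)
        · exact absurd hadj (by simp only [ext4_adj_rr]; decide)
        · exact hLRn w hadj.1 hw
        · exact absurd hadj (by simp only [ext4_adj_rr]; decide)
        · exact absurd hadj (by simp only [ext4_adj_rr]; decide)
      · intro x hx
        rcases x with v | i
        · have hvL : v ∈ L := by
            rcases hcov v with h | h
            · exact h
            · exact absurd (by simp [inlE, h] : Sum.inl v ∈ _) hx
          exact ⟨Sum.inr 0, by simp, by simp [hvL]⟩
        · fin_cases i
          · exact absurd (by simp) hx
          · exact ⟨Sum.inr 0, by simp, by simp⟩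
          · exact absurd (by simp) hx
          · exact ⟨Sum.inr 2, by simp, by simp⟩
    · constructor
      · intro x hx y hy hadj
        simp only [Finset.mem_union, Finset.mem_map, Finset.mem_insert, Finset.mem_singleton,
          inlE, Function.Embedding.coeFn_mk] at hx hy
        rcases hx with ⟨u, hu, rfl⟩ | (rfl | rfl) <;>
          rcases hy with ⟨w, hw, rfl⟩ | (rfl | rfl)
        · rcases hedge u w hadj with ⟨h1, _⟩ | ⟨_, h2⟩
          · exact hLRn u h1 hu
          · exact hLRn w h2 hw
        · exact hLRn u hadj.1 hu
        · rcases hadj.2 with h | h <;> simp at h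
        · exact hLRn w hadj.1 hw
        · exact absurd hadj (by simp only [ext4_adj_rr]; decide)
        · exact absurd hadj (by simp only [ext4_adj_rr]; decide)
        · rcases hadj.2 with h | h <;> simp at h
        · exact absurd hadj (by simp only [ext4_adj_rr]; decide)
        · exact absurd hadj (by simp only [ext4_adj_rr]; decide)
      · intro x hx
        rcases x with v | i
        · have hvL : v ∈ L := by
            rcases hcov v with h | h
            · exact h
            · exact absurd (by simp [inlE, h] : Sum.inl v ∈ _) hx
          exact ⟨Sum.inr 0, by simp, by simp [hvL]⟩
        · fin_cases i
          · exact absurd (by simp) hx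
          · exact ⟨Sum.inr 0, by simp, by simp⟩
          · exact ⟨Sum.inr 3, by simp, by simp⟩
          · exact absurd (by simp) hx
    · rw [isMaxIndep_iff] at hT
      obtain ⟨hTind, hTmax⟩ := hT
      constructor
      · intro x hx y hy hadj
        simp only [Finset.mem_union, Finset.mem_map, Finset.mem_insert, Finset.mem_singleton,
          inlE, Function.Embedding.coeFn_mk] at hx hy
        rcases hx with ⟨u, hu, rfl⟩ | (rfl | rfl) <;>
          rcases hy with ⟨w, hw, rfl⟩ | (rfl | rfl)
        · exact hTind u hu w hw hadj
        · rcases hadj.2 with h | h <;> simp at h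
        · rcases hadj.2 with h | h <;> simp at h
        · rcases hadj.2 with h | h <;> simp at h
        · exact absurd hadj (by simp only [ext4_adj_rr]; decide)
        · exact absurd hadj (by simp only [ext4_adj_rr]; decide)
        · rcases hadj.2 with h | h <;> simp at h
        · exact absurd hadj (by simp only [ext4_adj_rr]; decide)
        · exact absurd hadj (by simp only [ext4_adj_rr]; decide)
      · intro x hx
        rcases x with v | i
        · have hvT : v ∉ T := fun h => hx (by simp [inlE, h])
          obtain ⟨u, hu, hadj⟩ := hTmax v hvT
          exact ⟨Sum.inl u, by simp [inlE, hu], hadj⟩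
        · fin_cases i
          · exact ⟨Sum.inr 1, by simp, by simp⟩
          · exact absurd (by simp) hx
          · exact ⟨Sum.inr 1, by simp, by simp⟩
          · exact absurd (by simp) hx

lemma iotaM_ext4 {V : Type*} [Fintype V] [DecidableEq V] {G : SimpleGraph V}
    {L R : Finset V} (hLR : IsBipartition G L R) :
    iotaM (ext4 G L) = iotaM G + 2 := by
  classical
  have hchar := char_ext4 hLR
  -- membership facts
  have hB1 : (Sum.inr 1 : V ⊕ Fin 4) ∉ R.map (inlE V) ∪ {Sum.inr 0, Sum.inr 2} := by
    simp [inlE]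
  have hB2 : (Sum.inr 1 : V ⊕ Fin 4) ∉ R.map (inlE V) ∪ {Sum.inr 0, Sum.inr 3} := by
    simp [inlE]
  have hB3 : ∀ T : Finset V, (Sum.inr 1 : V ⊕ Fin 4) ∈ T.map (inlE V) ∪ {Sum.inr 1, Sum.inr 3} := by
    simp
  have hC1 : (Sum.inr 2 : V ⊕ Fin 4) ∈ R.map (inlE V) ∪ {Sum.inr 0, Sum.inr 2} := by simp
  have hC2 : (Sum.inr 2 : V ⊕ Fin 4) ∉ R.map (inlE V) ∪ {Sum.inr 0, Sum.inr 3} := by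
    simp [inlE]
  have hne : ((1:Fin 2) = 0) = False := by simp
  let f : ({T : Finset V // IsMaxIndep G T} ⊕ Fin 2) → {S : Finset (V ⊕ Fin 4) // IsMaxIndep (ext4 G L) S} :=
    fun x => match x with
    | Sum.inl ⟨T, hT⟩ => ⟨T.map (inlE V) ∪ {Sum.inr 1, Sum.inr 3},
        (hchar _).mpr (Or.inr (Or.inr ⟨T, hT, rfl⟩))⟩
    | Sum.inr i =>
        if i = 0 then ⟨R.map (inlE V) ∪ {Sum.inr 0, Sum.inr 2}, (hchar _).mpr (Or.inl rfl)⟩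
        else ⟨R.map (inlE V) ∪ {Sum.inr 0, Sum.inr 3}, (hchar _).mpr (Or.inr (Or.inl rfl))⟩
  have hfbij : Function.Bijective f := by
    constructor
    · rintro (⟨T1, hT1⟩ | i) (⟨T2, hT2⟩ | j) hfe
      · simp only [f, Subtype.mk.injEq] at hfe
        have : T1 = T2 := by
          ext v
          have := Finset.ext_iff.1 hfe (Sum.inl v)
          simpa [inlE] using this
        simp [this]
      · exfalso
        fin_cases j
        · simp only [f, Subtype.mk.injEq, Fin.mk_zero, Fin.mk_one, hne, if_false, reduceIte, Fin.isValue] at hfe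
          exact hB1 (hfe ▸ hB3 T1)
        · simp only [f, Subtype.mk.injEq, Fin.mk_zero, Fin.mk_one, hne, if_false, reduceIte, Fin.isValue] at hfe
          exact hB2 (hfe ▸ hB3 T1)
      · exfalso
        fin_cases i
        · simp only [f, Subtype.mk.injEq, Fin.mk_zero, Fin.mk_one, hne, if_false, reduceIte, Fin.isValue] at hfe
          exact hB1 (hfe.symm ▸ hB3 T2)
        · simp only [f, Subtype.mk.injEq, Fin.mk_zero, Fin.mk_one, hne, if_false, reduceIte, Fin.isValue] at hfe
          exact hB2 (hfe.symm ▸ hB3 T2)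
      · fin_cases i <;> fin_cases j
        · rfl
        · exfalso
          simp only [f, Subtype.mk.injEq, Fin.mk_zero, Fin.mk_one, hne, if_false, reduceIte, Fin.isValue] at hfe
          exact hC2 (hfe ▸ hC1)
        · exfalso
          simp only [f, Subtype.mk.injEq, Fin.mk_zero, Fin.mk_one, hne, if_false, reduceIte, Fin.isValue] at hfe
          exact hC2 (hfe.symm ▸ hC1)
        · rfl
    · rintro ⟨S, hS⟩
      rcases (hchar S).mp hS with rfl | rfl | ⟨T, hT, rfl⟩
      · exact ⟨Sum.inr 0, rfl⟩
      · exact ⟨Sum.inr 1, rfl⟩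
      · exact ⟨Sum.inl ⟨T, hT⟩, rfl⟩
  have := Nat.card_congr (Equiv.ofBijective f hfbij)
  rw [Nat.card_sum] at this
  simpa [iotaM] using this.symm

lemma isMaxIndep_comap {α β : Type*} (e : β ≃ α) (G : SimpleGraph α) (s : Finset β) :
    IsMaxIndep (G.comap e) s ↔ IsMaxIndep G (s.map e.toEmbedding) := by
  rw [isMaxIndep_iff, isMaxIndep_iff]
  constructor
  · rintro ⟨hind, hdom⟩
    constructor
    · intro x hx y hy
      obtain ⟨u, hu, rfl⟩ := Finset.mem_map.1 hx
      obtain ⟨v, hv, rfl⟩ := Finset.mem_map.1 hy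
      exact hind u hu v hv
    · intro x hx
      have hxs : e.symm x ∉ s := fun h =>
        hx (Finset.mem_map.2 ⟨e.symm x, h, by simp⟩)
      obtain ⟨u, hu, hadj⟩ := hdom _ hxs
      refine ⟨e u, Finset.mem_map.2 ⟨u, hu, rfl⟩, ?_⟩
      simpa using hadj
  · rintro ⟨hind, hdom⟩
    constructor
    · intro u hu v hv hadj
      exact hind (e u) (Finset.mem_map.2 ⟨u, hu, rfl⟩) (e v) (Finset.mem_map.2 ⟨v, hv, rfl⟩) hadj
    · intro v hv
      have hev : e v ∉ s.map e.toEmbedding := by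
        intro h
        obtain ⟨u, hu, heq⟩ := Finset.mem_map.1 h
        exact hv (e.injective heq ▸ hu)
      obtain ⟨u', hu', hadj⟩ := hdom _ hev
      obtain ⟨u, hu, rfl⟩ := Finset.mem_map.1 hu'
      exact ⟨u, hu, hadj⟩

lemma iotaM_comap {α β : Type*} [Fintype α] [Fintype β] (e : β ≃ α) (G : SimpleGraph α) :
    iotaM (G.comap e) = iotaM G := by
  refine Nat.card_congr (Equiv.subtypeEquiv e.finsetCongr fun s => ?_)
  rw [Equiv.finsetCongr_apply]
  exact isMaxIndep_comap e G s

lemma isBipartite_comap {α β : Type*} (e : β ≃ α) {G : SimpleGraph α}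
    (h : IsBipartite G) : IsBipartite (G.comap e) := by
  obtain ⟨L, R, hdis, hcov, hedge⟩ := h
  refine ⟨L.map e.symm.toEmbedding, R.map e.symm.toEmbedding, ?_, ?_, ?_⟩
  · rw [Finset.disjoint_map]
    exact hdis
  · intro v
    rcases hcov (e v) with hv | hv
    · exact Or.inl (Finset.mem_map.2 ⟨e v, hv, by simp⟩)
    · exact Or.inr (Finset.mem_map.2 ⟨e v, hv, by simp⟩)
  · intro u v hadj
    rcases hedge (e u) (e v) hadj with ⟨h1, h2⟩ | ⟨h1, h2⟩
    · exact Or.inl ⟨Finset.mem_map.2 ⟨e u, h1, by simp⟩, Finset.mem_map.2 ⟨e v, h2, by simp⟩⟩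
    · exact Or.inr ⟨Finset.mem_map.2 ⟨e u, h1, by simp⟩, Finset.mem_map.2 ⟨e v, h2, by simp⟩⟩

lemma noIsolated_comap {α β : Type*} (e : β ≃ α) {G : SimpleGraph α}
    (h : NoIsolated G) : NoIsolated (G.comap e) := by
  intro v
  obtain ⟨u, hadj⟩ := h (e v)
  exact ⟨e.symm u, by simpa using hadj⟩

theorem stmt_12 {V : Type*} [Fintype V] (G : SimpleGraph V)
    (hbip : IsBipartite G) (hiso : NoIsolated G) :
    ∃ (W : Type) (_ : Fintype W) (G' : SimpleGraph W),
      IsBipartite G' ∧ NoIsolated G' ∧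
      Fintype.card W = Fintype.card V + 4 ∧ iotaM G' = iotaM G + 2 := by
  classical
  obtain ⟨L, R, hLR⟩ := hbip
  have hcard : Fintype.card (V ⊕ Fin 4) = Fintype.card V + 4 := by simp
  let e : Fin (Fintype.card V + 4) ≃ (V ⊕ Fin 4) :=
    (Fintype.equivFinOfCardEq hcard).symm
  refine ⟨Fin (Fintype.card V + 4), inferInstance, (ext4 G L).comap e, ?_, ?_, ?_, ?_⟩
  · exact isBipartite_comap e ⟨_, _, isBipartition_ext4 hLR⟩
  · exact noIsolated_comap e (noIsolated_ext4 hiso)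
  · simp
  · rw [iotaM_comap e, iotaM_ext4 hLR]
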